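/- arXiv:1103.4702 — 2 statements merged into one kernel-verified Lean document; each statement's English description precedes it below -/
import Mathlib

section
/- Let f = x_i^{u_i} x_j^{u_j} − x_k^{u_k} x_l^{u_l} be a primitive binomial of I_A with i, j, k, l pairwise distinct and u_i < c_i, u_j < c_j, u_k < c_k, u_l < c_l. Then f is an indispensable binomial of J = I_A ∩ k[x_i,x_j,x_k,x_l], the toric ideal of {a_i,a_j,a_k,a_l}. -/
open MvPolynomial Finsupp

variable (K : Type*) [Field K]

/-- The `A`-degree of an exponent vector `u ∈ ℕ^n` with respect to `a_1, …, a_n ∈ ℕ`, namely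
`∑ i, u i * a i`. -/
def degN {n : ℕ} (a : Fin n → ℕ) (u : Fin n →₀ ℕ) : ℕ :=
  ∑ i, u i * a i

/-- The defining ideal `I_A` of the monomial curve `x_i = t^{a_i}`: the ideal generated by all
binomials `x^u - x^v` with `∑ u_i a_i = ∑ v_i a_i` (equivalently, the kernel of
`k[x_1,…,x_n] → k[t]`, `x_i ↦ t^{a_i}`). -/
noncomputable def curveIdeal {n : ℕ} (a : Fin n → ℕ) : Ideal (MvPolynomial (Fin n) K) :=
  Ideal.span { f | ∃ u v : Fin n →₀ ℕ, degN a u = degN a v ∧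
    f = monomial u (1 : K) - monomial v (1 : K) }

/-- `c` is the critical exponent of the variable `x_i`: the least positive integer `c` with
`c * a_i ∈ ∑_{j ≠ i} ℕ a_j`. -/
def IsCritExp {n : ℕ} (a : Fin n → ℕ) (i : Fin n) (c : ℕ) : Prop :=
  IsLeast { m : ℕ | 0 < m ∧ ∃ u : Fin n →₀ ℕ, u i = 0 ∧ m * a i = degN a u } c

/-- `f` is a critical binomial of `I_A` with respect to `x_i` (where `c` is the vector of
critical exponents): `f = x_i^{c_i} - ∏_{j ≠ i} x_j^{u_{ij}} ∈ I_A`. -/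
def IsCritBinom {n : ℕ} (a c : Fin n → ℕ) (i : Fin n) (f : MvPolynomial (Fin n) K) : Prop :=
  ∃ u : Fin n →₀ ℕ, u i = 0 ∧
    f = monomial (Finsupp.single i (c i)) (1 : K) - monomial u (1 : K) ∧
    f ∈ curveIdeal K a

/-- The critical ideal `C_A`: the ideal generated by all critical binomials of `I_A`. -/
noncomputable def criticalIdeal {n : ℕ} (a c : Fin n → ℕ) :
    Ideal (MvPolynomial (Fin n) K) :=
  Ideal.span { f | ∃ i : Fin n, IsCritBinom K a c i f }

/-- `S` is a set of binomials generating `J`. -/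
def IsBinomGenSet {σ : Type*} (J : Ideal (MvPolynomial σ K)) (S : Set (MvPolynomial σ K)) :
    Prop :=
  (∀ f ∈ S, ∃ u v : σ →₀ ℕ, f = monomial u (1 : K) - monomial v (1 : K)) ∧
  Ideal.span S = J

/-- The monomial `x^u` is an indispensable monomial of `J`: every set of binomials generating `J`
contains a binomial one of whose monomials is `x^u`. -/
def IndispMonomial {σ : Type*} (J : Ideal (MvPolynomial σ K)) (u : σ →₀ ℕ) : Prop :=
  ∀ S : Set (MvPolynomial σ K), IsBinomGenSet K J S → ∃ f ∈ S, u ∈ f.support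

/-- `f` is an indispensable binomial of `J`: every set of binomials generating `J` contains
`f` or `-f`. -/
def IndispBinomial {σ : Type*} (J : Ideal (MvPolynomial σ K)) (f : MvPolynomial σ K) : Prop :=
  ∀ S : Set (MvPolynomial σ K), IsBinomGenSet K J S → f ∈ S ∨ -f ∈ S

/-- `x^u - x^v` is a primitive binomial of `I_A`: it is a nonzero binomial of `I_A` and there is
no other nonzero binomial `x^{u'} - x^{v'} ∈ I_A` with `x^{u'} ∣ x^u` and `x^{v'} ∣ x^v`. -/
def IsPrimitive {n : ℕ} (a : Fin n → ℕ) (u v : Fin n →₀ ℕ) : Prop :=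
  u ≠ v ∧ (monomial u (1 : K) - monomial v (1 : K)) ∈ curveIdeal K a ∧
  ∀ u' v' : Fin n →₀ ℕ, u' ≤ u → v' ≤ v → u' ≠ v' →
    (monomial u' (1 : K) - monomial v' (1 : K)) ∈ curveIdeal K a → u' = u ∧ v' = v

lemma degN_add {n : ℕ} (a : Fin n → ℕ) (u v : Fin n →₀ ℕ) :
    degN a (u + v) = degN a u + degN a v := by
  simp [degN, add_mul, Finset.sum_add_distrib]

lemma degN_single {n : ℕ} (a : Fin n → ℕ) (p : Fin n) (m : ℕ) :
    degN a (Finsupp.single p m) = m * a p := by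
  simp [degN, Finsupp.single_apply, ite_mul, Finset.sum_ite_eq]

lemma mem_curve_of_deg {n : ℕ} (a : Fin n → ℕ) {u v : Fin n →₀ ℕ}
    (h : degN a u = degN a v) :
    (monomial u (1 : K) - monomial v 1) ∈ curveIdeal K a :=
  Ideal.subset_span ⟨u, v, h, rfl⟩

lemma deg_of_mem_curve {n : ℕ} (a : Fin n → ℕ) {u v : Fin n →₀ ℕ}
    (h : (monomial u (1 : K) - monomial v 1) ∈ curveIdeal K a) : degN a u = degN a v := by
  classical
  let φ : MvPolynomial (Fin n) K →ₐ[K] Polynomial K := aeval fun p => Polynomial.X ^ a p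
  have key : ∀ w : Fin n →₀ ℕ, φ (monomial w (1:K)) = Polynomial.X ^ degN a w := by
    intro w
    show aeval _ _ = _
    rw [aeval_monomial, map_one, one_mul]
    have h1 : (w.prod fun p e => ((Polynomial.X : Polynomial K) ^ a p) ^ e)
        = w.prod fun p e => (Polynomial.X : Polynomial K) ^ (e * a p) :=
      Finsupp.prod_congr fun p _ => by rw [← pow_mul, mul_comm]
    rw [h1, Finsupp.prod_fintype _ _ (fun p => by simp), Finset.prod_pow_eq_pow_sum]
    rfl
  have hker : curveIdeal K a ≤ RingHom.ker φ.toRingHom := by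
    rw [curveIdeal, Ideal.span_le]
    rintro f ⟨u', v', hd, rfl⟩
    have hf : φ (monomial u' (1:K) - monomial v' 1) = 0 := by
      rw [map_sub, key, key, hd, sub_self]
    simpa [RingHom.mem_ker] using hf
  have h0 := hker h
  rw [RingHom.mem_ker] at h0
  have h1 : φ (monomial u (1:K) - monomial v 1) = 0 := h0
  rw [map_sub, key, key, sub_eq_zero] at h1
  have h2 := congrArg Polynomial.natDegree h1
  simpa using h2

lemma nat_key {B w m s : ℕ} (hB : 0 < B) (h : w * B + s = m * B)
    (hno : ∀ t, 0 < t → t * B = s → False) : w = m ∧ s = 0 := by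
  have h1 : w * B ≤ m * B := Nat.le.intro h
  have hwm : w ≤ m := Nat.le_of_mul_le_mul_right h1 hB
  obtain ⟨t, rfl⟩ := Nat.exists_eq_add_of_le hwm
  rw [Nat.add_mul] at h
  have hs : t * B = s := by linarith
  rcases Nat.eq_zero_or_pos t with rfl | hpos
  · exact ⟨by omega, by rw [← hs, Nat.zero_mul]⟩
  · exact (hno t hpos hs).elim

lemma omega1 (q0 r p1 p2 p3 q1 : ℕ) (H : q0 + r + p1 + p2 + p3 = q0 + q1) :
    p1 + (r + p2 + p3) = q1 := by omega

lemma omega2 (x s w q : ℕ) (h1 : x = s) (h2 : w + s = q) : x ≤ q := by omega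

lemma omega3 (p0 qj d p2 p3 e : ℕ) (H : p0 + (qj + d) + p2 + p3 = p0 + e + qj) :
    e = d + p2 + p3 := by omega

lemma omega4 (p0 p1 qk d p3 ql : ℕ) (H : p0 + p1 + (qk + d) + p3 = qk + ql) :
    p3 + (p0 + p1 + d) = ql := by omega

lemma omega5 (p0 p1 p2 ql d e : ℕ) (H : p0 + p1 + p2 + (ql + d) = p2 + e + ql) :
    e = p0 + p1 + d := by omega

lemma omega6 (p0 p1 p2 p3 e f : ℕ) (H : p0 + p1 + p2 + p3 = p0 + e + (p1 + f)) :
    e + f = p2 + p3 := by omega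

/-- Let `f = x_i^{u_i} x_j^{u_j} - x_k^{u_k} x_l^{u_l}` be a primitive binomial
of `I_A` with `i, j, k, l` pairwise distinct and `u_i < c_i`, `u_j < c_j`, `u_k < c_k`,
`u_l < c_l`. Then `f` is an indispensable binomial of `J = I_A ∩ k[x_i, x_j, x_k, x_l]`, the
toric ideal of `{a_i, a_j, a_k, a_l}`. -/
theorem statement14 {n : ℕ} (a c : Fin n → ℕ) (ha : ∀ i, 0 < a i)
    (hgcd : Finset.univ.gcd a = 1) (hc : ∀ i, IsCritExp a i (c i))
    (i j k l : Fin n) (hij : i ≠ j) (hik : i ≠ k) (hil : i ≠ l) (hjk : j ≠ k)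
    (hjl : j ≠ l) (hkl : k ≠ l) (ui uj uk ul : ℕ)
    (hprim : IsPrimitive K a (Finsupp.single i ui + Finsupp.single j uj)
      (Finsupp.single k uk + Finsupp.single l ul))
    (hi : ui < c i) (hj : uj < c j) (hk : uk < c k) (hl : ul < c l) :
    IndispBinomial K (curveIdeal K ![a i, a j, a k, a l])
      (monomial (Finsupp.single (0 : Fin 4) ui + Finsupp.single (1 : Fin 4) uj) (1 : K) -
        monomial (Finsupp.single (2 : Fin 4) uk + Finsupp.single (3 : Fin 4) ul) (1 : K)) := by
  classical
  intro S hS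
  by_contra hcon
  push_neg at hcon
  obtain ⟨hfS, hfS'⟩ := hcon
  set b : Fin 4 → ℕ := ![a i, a j, a k, a l] with hb
  set U : Fin 4 →₀ ℕ := Finsupp.single 0 ui + Finsupp.single 1 uj with hUdef
  set V : Fin 4 →₀ ℕ := Finsupp.single 2 uk + Finsupp.single 3 ul with hVdef
  -- components of U and V
  have hU0 : U 0 = ui := by
    rw [hUdef, Finsupp.add_apply, Finsupp.single_eq_same,
      Finsupp.single_eq_of_ne (by decide), add_zero]
  have hU1 : U 1 = uj := by
    rw [hUdef, Finsupp.add_apply, Finsupp.single_eq_same,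
      Finsupp.single_eq_of_ne (by decide), zero_add]
  have hU2 : U 2 = 0 := by
    rw [hUdef, Finsupp.add_apply, Finsupp.single_eq_of_ne (by decide),
      Finsupp.single_eq_of_ne (by decide), add_zero]
  have hU3 : U 3 = 0 := by
    rw [hUdef, Finsupp.add_apply, Finsupp.single_eq_of_ne (by decide),
      Finsupp.single_eq_of_ne (by decide), add_zero]
  have hV0 : V 0 = 0 := by
    rw [hVdef, Finsupp.add_apply, Finsupp.single_eq_of_ne (by decide),
      Finsupp.single_eq_of_ne (by decide), add_zero]
  have hV1 : V 1 = 0 := by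
    rw [hVdef, Finsupp.add_apply, Finsupp.single_eq_of_ne (by decide),
      Finsupp.single_eq_of_ne (by decide), add_zero]
  have hV2 : V 2 = uk := by
    rw [hVdef, Finsupp.add_apply, Finsupp.single_eq_same,
      Finsupp.single_eq_of_ne (by decide), add_zero]
  have hV3 : V 3 = ul := by
    rw [hVdef, Finsupp.add_apply, Finsupp.single_eq_same,
      Finsupp.single_eq_of_ne (by decide), zero_add]
  -- extensionality helper on Fin 4
  have ext4 : ∀ w w' : Fin 4 →₀ ℕ, w 0 = w' 0 → w 1 = w' 1 → w 2 = w' 2 → w 3 = w' 3 →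
      w = w' := by
    intro w w' h0 h1 h2 h3
    ext m
    fin_cases m
    · exact h0
    · exact h1
    · exact h2
    · exact h3
  -- the embedding into n variables
  set E : (Fin 4 →₀ ℕ) → (Fin n →₀ ℕ) := fun w =>
    Finsupp.single i (w 0) + Finsupp.single j (w 1) + Finsupp.single k (w 2) +
      Finsupp.single l (w 3) with hE
  have hEi : ∀ w, E w i = w 0 := by
    intro w
    simp only [hE, Finsupp.add_apply, Finsupp.single_eq_same,
      Finsupp.single_eq_of_ne' (Ne.symm hij), Finsupp.single_eq_of_ne' (Ne.symm hik),
      Finsupp.single_eq_of_ne' (Ne.symm hil), add_zero]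
  have hEj : ∀ w, E w j = w 1 := by
    intro w
    simp only [hE, Finsupp.add_apply, Finsupp.single_eq_same,
      Finsupp.single_eq_of_ne' hij, Finsupp.single_eq_of_ne' (Ne.symm hjk),
      Finsupp.single_eq_of_ne' (Ne.symm hjl), add_zero, zero_add]
  have hEk : ∀ w, E w k = w 2 := by
    intro w
    simp only [hE, Finsupp.add_apply, Finsupp.single_eq_same,
      Finsupp.single_eq_of_ne' hik, Finsupp.single_eq_of_ne' hjk,
      Finsupp.single_eq_of_ne' (Ne.symm hkl), add_zero, zero_add]
  have hEl : ∀ w, E w l = w 3 := by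
    intro w
    simp only [hE, Finsupp.add_apply, Finsupp.single_eq_same,
      Finsupp.single_eq_of_ne' hil, Finsupp.single_eq_of_ne' hjl,
      Finsupp.single_eq_of_ne' hkl, add_zero, zero_add]
  have hEinj : ∀ w w', E w = E w' → w = w' := by
    intro w w' h
    refine ext4 w w' ?_ ?_ ?_ ?_
    · rw [← hEi w, ← hEi w', h]
    · rw [← hEj w, ← hEj w', h]
    · rw [← hEk w, ← hEk w', h]
    · rw [← hEl w, ← hEl w', h]
  have hEmono : ∀ w w', w ≤ w' → E w ≤ E w' := by
    intro w w' h
    have h' := Finsupp.le_def.mp h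
    simp only [hE]
    exact add_le_add (add_le_add (add_le_add
      (Finsupp.single_le_single.mpr (h' 0)) (Finsupp.single_le_single.mpr (h' 1)))
      (Finsupp.single_le_single.mpr (h' 2))) (Finsupp.single_le_single.mpr (h' 3))
  have hEU : E U = Finsupp.single i ui + Finsupp.single j uj := by
    simp only [hE, hU0, hU1, hU2, hU3, Finsupp.single_zero, add_zero]
  have hEV : E V = Finsupp.single k uk + Finsupp.single l ul := by
    simp only [hE, hV0, hV1, hV2, hV3, Finsupp.single_zero, add_zero, zero_add]
  -- degrees
  have hdb : ∀ w : Fin 4 →₀ ℕ, degN b w =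
      w 0 * a i + w 1 * a j + w 2 * a k + w 3 * a l := by
    intro w
    rw [degN, Fin.sum_univ_four]
    simp [hb]
  have hEdeg : ∀ w : Fin 4 →₀ ℕ, degN a (E w) = degN b w := by
    intro w
    rw [hdb]
    simp only [hE]
    rw [degN_add, degN_add, degN_add, degN_single, degN_single, degN_single, degN_single]
  have hUV2 : ui * a i + uj * a j = uk * a k + ul * a l := by
    have hda := deg_of_mem_curve K a hprim.2.1
    rwa [degN_add, degN_add, degN_single, degN_single, degN_single, degN_single] at hda
  have hU' : degN b U = ui * a i + uj * a j := by
    rw [hdb, hU0, hU1, hU2, hU3]; ring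
  have hV' : degN b V = uk * a k + ul * a l := by
    rw [hdb, hV0, hV1, hV2, hV3]; ring
  have hdUV : degN b U = degN b V := by rw [hU', hV', hUV2]
  have hUVne : U ≠ V := by
    intro h
    exact hprim.1 (by rw [← hEU, ← hEV, h])
  -- crit helper
  have crit : ∀ p q r s : Fin n, q ≠ p → r ≠ p → s ≠ p → ∀ m x y z : ℕ,
      m * a p = x * a q + y * a r + z * a s → 0 < m → c p ≤ m := by
    intro p q r s hq hr hs m x y z hm hpos
    refine (hc p).2 ⟨hpos, Finsupp.single q x + Finsupp.single r y + Finsupp.single s z,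
      ?_, ?_⟩
    · simp [Finsupp.add_apply, Finsupp.single_eq_of_ne' hq, Finsupp.single_eq_of_ne' hr,
        Finsupp.single_eq_of_ne' hs]
    · rw [degN_add, degN_add, degN_single, degN_single, degN_single, hm]
  have hposmul : ∀ x p : ℕ, 0 < p → x * p = 0 → x = 0 := by
    intro x p hp hxp
    rcases Nat.mul_eq_zero.mp hxp with h | h
    · exact h
    · omega
  have addz : ∀ x y z : ℕ, x + y + z = 0 → x = 0 ∧ y = 0 ∧ z = 0 := by
    intro x y z h
    omega
  -- the fiber lemma
  have Fiber : ∀ w : Fin 4 →₀ ℕ, degN b w = degN b U → w = U ∨ w = V := by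
    intro w hw
    have H : w 0 * a i + w 1 * a j + w 2 * a k + w 3 * a l = ui * a i + uj * a j := by
      rw [← hdb, hw, hU']
    rcases le_or_gt ui (w 0) with h0 | h0
    · -- w = U
      left
      obtain ⟨d0, hd0⟩ : ∃ d, w 0 = ui + d := ⟨w 0 - ui, by omega⟩
      have H' : w 1 * a j + (d0 * a i + w 2 * a k + w 3 * a l) = uj * a j := by
        rw [hd0, Nat.add_mul] at H; exact omega1 _ _ _ _ _ _ H
      obtain ⟨hw1, hz⟩ := nat_key (ha j) H' (by
        intro t ht hts
        have hcj : c j ≤ t :=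
          crit j i k l hij (Ne.symm hjk) (Ne.symm hjl) t d0 (w 2) (w 3) hts ht
        have h2 : t * a j ≤ uj * a j := omega2 _ _ _ _ hts H'
        have := Nat.le_of_mul_le_mul_right h2 (ha j)
        omega)
      obtain ⟨hz0, hz2, hz3⟩ := addz _ _ _ hz
      refine ext4 w U ?_ ?_ ?_ ?_
      · rw [hU0]; have := hposmul _ _ (ha i) hz0; omega
      · rw [hU1]; exact hw1
      · rw [hU2]; exact hposmul _ _ (ha k) hz2
      · rw [hU3]; exact hposmul _ _ (ha l) hz3
    · rcases le_or_gt uj (w 1) with h1 | h1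
      · -- contradiction with crit i
        exfalso
        obtain ⟨d1, hd1⟩ : ∃ d, w 1 = uj + d := ⟨w 1 - uj, by omega⟩
        obtain ⟨e0, he0⟩ : ∃ e, ui = w 0 + e := ⟨ui - w 0, by omega⟩
        have he0pos : 0 < e0 := by omega
        have Heq : e0 * a i = d1 * a j + w 2 * a k + w 3 * a l := by
          rw [hd1, Nat.add_mul] at H
          rw [he0, Nat.add_mul] at H
          exact omega3 _ _ _ _ _ _ H
        have := crit i j k l (Ne.symm hij) (Ne.symm hik) (Ne.symm hil) e0 d1 (w 2) (w 3)
          Heq he0pos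
        omega
      · rcases le_or_gt uk (w 2) with h2 | h2
        · -- w = V
          right
          have H2 : w 0 * a i + w 1 * a j + w 2 * a k + w 3 * a l =
              uk * a k + ul * a l := H.trans hUV2
          obtain ⟨d2, hd2⟩ : ∃ d, w 2 = uk + d := ⟨w 2 - uk, by omega⟩
          have H' : w 3 * a l + (w 0 * a i + w 1 * a j + d2 * a k) = ul * a l := by
            rw [hd2, Nat.add_mul] at H2; exact omega4 _ _ _ _ _ _ H2
          obtain ⟨hw3, hz⟩ := nat_key (ha l) H' (by
            intro t ht hts
            have hcl : c l ≤ t :=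
              crit l i j k hil hjl hkl t (w 0) (w 1) d2
                hts ht
            have h3 : t * a l ≤ ul * a l := omega2 _ _ _ _ hts H'
            have := Nat.le_of_mul_le_mul_right h3 (ha l)
            omega)
          obtain ⟨hz0, hz1, hz2⟩ := addz _ _ _ hz
          refine ext4 w V ?_ ?_ ?_ ?_
          · rw [hV0]; exact hposmul _ _ (ha i) hz0
          · rw [hV1]; exact hposmul _ _ (ha j) hz1
          · rw [hV2]; have := hposmul _ _ (ha k) hz2; omega
          · rw [hV3]; exact hw3
        · rcases le_or_gt ul (w 3) with h3 | h3
          · -- contradiction with crit k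
            exfalso
            have H2 : w 0 * a i + w 1 * a j + w 2 * a k + w 3 * a l =
                uk * a k + ul * a l := H.trans hUV2
            obtain ⟨d3, hd3⟩ : ∃ d, w 3 = ul + d := ⟨w 3 - ul, by omega⟩
            obtain ⟨e2, he2⟩ : ∃ e, uk = w 2 + e := ⟨uk - w 2, by omega⟩
            have he2pos : 0 < e2 := by omega
            have Heq : e2 * a k = w 0 * a i + w 1 * a j + d3 * a l := by
              rw [hd3, Nat.add_mul] at H2
              rw [he2, Nat.add_mul] at H2
              exact omega5 _ _ _ _ _ _ H2
            have := crit k i j l hik hjk (Ne.symm hkl) e2 (w 0) (w 1) d3 Heq he2pos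
            omega
          · -- all strict: contradiction with primitivity
            exfalso
            obtain ⟨e0, he0⟩ : ∃ e, ui = w 0 + e := ⟨ui - w 0, by omega⟩
            obtain ⟨e1, he1⟩ : ∃ e, uj = w 1 + e := ⟨uj - w 1, by omega⟩
            have he0pos : 0 < e0 := by omega
            have hdeg' : degN a (Finsupp.single i e0 + Finsupp.single j e1) =
                degN a (Finsupp.single k (w 2) + Finsupp.single l (w 3)) := by
              rw [degN_add, degN_add, degN_single, degN_single, degN_single, degN_single]
              rw [he0, Nat.add_mul] at H
              rw [he1, Nat.add_mul] at H
              exact omega6 _ _ _ _ _ _ H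
            have hle1 : Finsupp.single i e0 + Finsupp.single j e1 ≤
                Finsupp.single i ui + Finsupp.single j uj :=
              add_le_add (Finsupp.single_le_single.mpr (by omega))
                (Finsupp.single_le_single.mpr (by omega))
            have hle2 : Finsupp.single k (w 2) + Finsupp.single l (w 3) ≤
                Finsupp.single k uk + Finsupp.single l ul :=
              add_le_add (Finsupp.single_le_single.mpr (by omega))
                (Finsupp.single_le_single.mpr (by omega))
            have hne : (Finsupp.single i e0 + Finsupp.single j e1 : Fin n →₀ ℕ) ≠
                Finsupp.single k (w 2) + Finsupp.single l (w 3) := by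
              intro hEq
              have h1 := DFunLike.congr_fun hEq i
              simp only [Finsupp.add_apply, Finsupp.single_eq_same,
                Finsupp.single_eq_of_ne' (Ne.symm hij), Finsupp.single_eq_of_ne' (Ne.symm hik),
                Finsupp.single_eq_of_ne' (Ne.symm hil), add_zero] at h1
              omega
            obtain ⟨hu'', hv''⟩ := hprim.2.2 _ _ hle1 hle2 hne
              (mem_curve_of_deg K a hdeg')
            have h1 := DFunLike.congr_fun hv'' k
            simp only [Finsupp.add_apply, Finsupp.single_eq_same,
              Finsupp.single_eq_of_ne' (Ne.symm hkl), add_zero] at h1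
            omega
  -- Lemma A
  have LemA : ∀ w1 w2 : Fin 4 →₀ ℕ, w1 ≠ w2 → degN b w1 = degN b w2 → w1 ≤ U →
      w1 = U ∧ w2 = V := by
    intro w1 w2 hne hdeq hle
    have hUsplit : U - w1 + w1 = U := tsub_add_cancel_of_le hle
    have hdm : degN b (U - w1 + w2) = degN b U := by
      have h1 : degN b (U - w1) + degN b w1 = degN b U := by rw [← degN_add, hUsplit]
      rw [degN_add, ← hdeq]
      omega
    rcases Fiber _ hdm with hEq | hEq
    · exfalso
      apply hne
      have h21 : w2 = w1 := by
        ext m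
        have hm := DFunLike.congr_fun (hEq.trans hUsplit.symm) m
        simp only [Finsupp.add_apply] at hm
        omega
      exact h21.symm
    · have hle2 : w2 ≤ V := hEq ▸ le_add_self
      have hmem : (monomial (E w1) (1:K) - monomial (E w2) 1) ∈ curveIdeal K a :=
        mem_curve_of_deg K a (by rw [hEdeg, hEdeg]; exact hdeq)
      have hne' : E w1 ≠ E w2 := fun h => hne (hEinj _ _ h)
      have hle1' : E w1 ≤ Finsupp.single i ui + Finsupp.single j uj := by
        rw [← hEU]; exact hEmono _ _ hle
      have hle2' : E w2 ≤ Finsupp.single k uk + Finsupp.single l ul := by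
        rw [← hEV]; exact hEmono _ _ hle2
      obtain ⟨h1, h2⟩ := hprim.2.2 _ _ hle1' hle2' hne' hmem
      exact ⟨hEinj _ _ (h1.trans hEU.symm), hEinj _ _ (h2.trans hEV.symm)⟩
  -- final extraction
  have hfJ : (monomial U (1:K) - monomial V 1) ∈ Ideal.span S := by
    rw [hS.2]; exact mem_curve_of_deg K b hdUV
  obtain ⟨ρ, hρS, hρ⟩ := Submodule.mem_span_set.mp hfJ
  have hcfU : coeff U (monomial U (1:K) - monomial V 1) = 1 := by
    rw [coeff_sub, coeff_monomial, coeff_monomial, if_pos rfl,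
      if_neg (Ne.symm hUVne), sub_zero]
  have hzero : ∀ s ∈ ρ.support, coeff U (ρ s • s) = 0 := by
    intro s hs
    have hsS : s ∈ S := hρS hs
    obtain ⟨w1, w2, hw⟩ := hS.1 s hsS
    by_cases hww : w1 = w2
    · rw [hw, hww, sub_self, smul_zero, coeff_zero]
    · have hsJ : s ∈ curveIdeal K b := by rw [← hS.2]; exact Ideal.subset_span hsS
      have hdeq : degN b w1 = degN b w2 := by
        refine deg_of_mem_curve K b ?_
        rw [← hw]; exact hsJ
      have hn1 : ¬ w1 ≤ U := by
        intro hle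
        obtain ⟨e1, e2⟩ := LemA w1 w2 hww hdeq hle
        exact hfS (by rw [← e1, ← e2, ← hw]; exact hsS)
      have hn2 : ¬ w2 ≤ U := by
        intro hle
        obtain ⟨e1, e2⟩ := LemA w2 w1 (Ne.symm hww) hdeq.symm hle
        apply hfS'
        have hsf : s = -(monomial U (1:K) - monomial V 1) := by
          rw [hw, e1, e2]; ring
        rw [← hsf]; exact hsS
      rw [hw, smul_eq_mul, mul_sub, coeff_sub, coeff_mul_monomial', coeff_mul_monomial',
        if_neg hn1, if_neg hn2, sub_zero]
  have h1 : coeff U (ρ.sum fun mi r => r • mi) = ∑ s ∈ ρ.support, coeff U (ρ s • s) := by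
    rw [Finsupp.sum, coeff_sum]
  rw [hρ, hcfU, Finset.sum_eq_zero hzero] at h1
  exact one_ne_zero h1
end

section
/- Let n = 4 and let f_i = x_i^{c_i} − Π_{j≠i} x_j^{u_{ij}}, i = 1,…,4, be critical binomials of I_A. If f_i ≠ −f_j for every i ≠ j, then the critical ideal satisfies C_A = ⟨f_1, f_2, f_3, f_4⟩. -/
open MvPolynomial Finsupp

variable (K : Type*) [Field K]

namespace S17

variable {a c : Fin 4 → ℕ} {u : Fin 4 → (Fin 4 →₀ ℕ)}

lemma degN_add (a : Fin 4 → ℕ) (x y : Fin 4 →₀ ℕ) :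
    degN a (x + y) = degN a x + degN a y := by
  simp [degN, Finsupp.add_apply, add_mul, Finset.sum_add_distrib]

lemma degN_single (a : Fin 4 → ℕ) (j : Fin 4) (m : ℕ) :
    degN a (Finsupp.single j m) = m * a j := by
  simp [degN, Finsupp.single_apply]

lemma degN_eq_zero (ha : ∀ i, 0 < a i) {x : Fin 4 →₀ ℕ} (h : degN a x = 0) : x = 0 := by
  ext k
  have := (Finset.sum_eq_zero_iff.mp h) k (Finset.mem_univ k)
  have hk := ha k
  simpa [Nat.mul_eq_zero, Nat.pos_iff_ne_zero.mp hk] using this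

lemma coord_le_degN (a : Fin 4 → ℕ) (x : Fin 4 →₀ ℕ) (k : Fin 4) :
    x k * a k ≤ degN a x :=
  Finset.single_le_sum (f := fun i => x i * a i) (fun i _ => Nat.zero_le _) (Finset.mem_univ k)

lemma degN_mono {x y : Fin 4 →₀ ℕ} (h : x ≤ y) : degN a x ≤ degN a y :=
  Finset.sum_le_sum fun i _ => Nat.mul_le_mul_right _ (Finsupp.le_def.mp h i)

lemma degN_lt (ha : ∀ i, 0 < a i) {x y : Fin 4 →₀ ℕ} (hxy : x ≤ y) {k : Fin 4}
    (hk : x k ≠ y k) : degN a x < degN a y := by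
  refine Finset.sum_lt_sum (fun i _ => Nat.mul_le_mul_right _ (Finsupp.le_def.mp hxy i)) ?_
  exact ⟨k, Finset.mem_univ k,
    (Nat.mul_lt_mul_right (ha k)).mpr (lt_of_le_of_ne (Finsupp.le_def.mp hxy k) hk)⟩

lemma le_of_degN_eq (ha : ∀ i, 0 < a i) {x y : Fin 4 →₀ ℕ} (hxy : x ≤ y)
    (h : degN a x = degN a y) : x = y := by
  ext k
  by_contra hk
  exact absurd h (Nat.ne_of_lt (degN_lt ha hxy hk))

lemma degN_tsub {x y : Fin 4 →₀ ℕ} (h : y ≤ x) :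
    degN a (x - y) + degN a y = degN a x := by
  rw [← degN_add, tsub_add_cancel_of_le h]

lemma degN_sub_comm {x y : Fin 4 →₀ ℕ} (h : degN a x = degN a y) :
    degN a (x - y) = degN a (y - x) := by
  have key : degN a (x - y) + degN a y = degN a (y - x) + degN a x := by
    unfold degN
    rw [← Finset.sum_add_distrib, ← Finset.sum_add_distrib]
    apply Finset.sum_congr rfl
    intro k _
    simp only [Finsupp.tsub_apply]
    rw [← Nat.add_mul, ← Nat.add_mul]
    congr 1
    omega
  omega

/-- The elementary move relation generated by the binomials `x_j^{c_j} - x^{u_j}`. -/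
def Mv (c : Fin 4 → ℕ) (u : Fin 4 → (Fin 4 →₀ ℕ)) (x y : Fin 4 →₀ ℕ) : Prop :=
  ∃ j t, x = t + Finsupp.single j (c j) ∧ y = t + u j

lemma eqv_move (c : Fin 4 → ℕ) (u : Fin 4 → (Fin 4 →₀ ℕ)) {v : Fin 4 →₀ ℕ} {j : Fin 4}
    (h : c j ≤ v j) :
    Relation.EqvGen (Mv c u) v ((v - Finsupp.single j (c j)) + u j) :=
  Relation.EqvGen.rel _ _ ⟨j, v - Finsupp.single j (c j),
    (tsub_add_cancel_of_le (Finsupp.single_le_iff.mpr h)).symm, rfl⟩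

lemma eqvt {α : Type*} {r : α → α → Prop} {x y z : α} (h1 : Relation.EqvGen r x y)
    (h2 : Relation.EqvGen r y z) : Relation.EqvGen r x z :=
  Relation.EqvGen.trans _ _ _ h1 h2

lemma eqvs {α : Type*} {r : α → α → Prop} {x y : α} (h : Relation.EqvGen r x y) :
    Relation.EqvGen r y x :=
  Relation.EqvGen.symm _ _ h

def Hmin (a c : Fin 4 → ℕ) : Prop :=
  ∀ l (m : ℕ) (x : Fin 4 →₀ ℕ), 0 < m → x l = 0 → m * a l = degN a x → c l ≤ m

lemma L1 (ha : ∀ i, 0 < a i) (hmin : Hmin a c) :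
    ∀ l (v : Fin 4 →₀ ℕ), degN a v = c l * a l → v l ≠ 0 → v = Finsupp.single l (c l) := by
  intro l v hdeg hvl
  have hsplit := Finsupp.single_add_erase l v
  have hd2 : v l * a l + degN a (v.erase l) = c l * a l := by
    rw [← degN_single a l (v l), ← degN_add, hsplit, hdeg]
  rcases Nat.eq_zero_or_pos (degN a (v.erase l)) with h0 | hpos
  · have he : v.erase l = 0 := degN_eq_zero ha h0
    rw [he, add_zero] at hsplit
    have hv : v = Finsupp.single l (v l) := hsplit.symm
    have hvc : v l = c l := by
      have hal := ha l
      have : v l * a l = c l * a l := by omega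
      exact Nat.eq_of_mul_eq_mul_right hal this
    rw [hvc] at hv
    exact hv
  · have hlt : v l < c l := by
      have hal := ha l
      by_contra hge
      push_neg at hge
      have : c l * a l ≤ v l * a l := Nat.mul_le_mul_right _ hge
      omega
    have hm := hmin l (c l - v l) (v.erase l) (by omega) (Finsupp.erase_same)
      (by rw [Nat.sub_mul]; omega)
    omega

lemma fin4_cases : ∀ i j k l x : Fin 4, i ≠ j → i ≠ k → i ≠ l → j ≠ k → j ≠ l → k ≠ l →
    (x = i ∨ x = j ∨ x = k ∨ x = l) := by decide

lemma fin4_fourth : ∀ i j k : Fin 4, i ≠ j → i ≠ k → j ≠ k →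
    ∃ z, z ≠ i ∧ z ≠ j ∧ z ≠ k ∧ ∀ x : Fin 4, x = i ∨ x = j ∨ x = k ∨ x = z := by decide

/-- The sign/shape lemma: two distinct `i`-free vectors of the same `A`-degree differ by a
"one positive coordinate" pattern (in one direction or the other). -/
lemma shape (ha : ∀ i, 0 < a i) (hmin : Hmin a c) {i : Fin 4} {v w : Fin 4 →₀ ℕ}
    (hvi : v i = 0) (hwi : w i = 0) (hd : degN a v = degN a w) (hvw : v ≠ w) :
    ∃ j g n, j ≠ i ∧ c j ≤ g ∧ n j = 0 ∧ n i = 0 ∧ n ≠ 0 ∧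
      (v + n = w + Finsupp.single j g ∨ w + n = v + Finsupp.single j g) := by
  classical
  have main : ∀ v w : Fin 4 →₀ ℕ, v i = 0 → w i = 0 → degN a v = degN a w →
      (Finset.univ.filter (fun k => w k < v k)).card = 1 → v ≠ w →
      ∃ j g n, j ≠ i ∧ c j ≤ g ∧ n j = 0 ∧ n i = 0 ∧ n ≠ 0 ∧
        v + n = w + Finsupp.single j g := by
    intro v w hvi hwi hd hP hvw2
    obtain ⟨j, hj⟩ := Finset.card_eq_one.mp hP
    have hjP : w j < v j := by
      have : j ∈ Finset.univ.filter (fun k => w k < v k) := by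
        rw [hj]; exact Finset.mem_singleton_self j
      simpa using this
    have hle : ∀ k, k ≠ j → v k ≤ w k := by
      intro k hk
      by_contra hgt
      push_neg at hgt
      have : k ∈ Finset.univ.filter (fun k => w k < v k) := by simpa using hgt
      rw [hj] at this
      exact hk (Finset.mem_singleton.mp this)
    have hji : j ≠ i := by intro h; subst h; omega
    have heq : v + (w - v) = w + Finsupp.single j (v j - w j) := by
      ext k
      simp only [Finsupp.add_apply, Finsupp.tsub_apply, Finsupp.single_apply]
      by_cases hk : k = j
      · subst hk; simp; omega
      · rw [if_neg (fun h => hk h.symm)]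
        have := hle k hk
        omega
    have hne : (w - v) ≠ 0 := by
      intro h0
      have hwle : w ≤ v := by
        refine Finsupp.le_def.mpr fun k => ?_
        have := DFunLike.congr_fun h0 k
        simp only [Finsupp.tsub_apply, Finsupp.coe_zero, Pi.zero_apply] at this
        omega
      have heq2 := le_of_degN_eq ha hwle hd.symm
      rw [heq2] at hjP
      omega
    have hdegn : degN a (w - v) = (v j - w j) * a j := by
      have := congrArg (degN a) heq
      rw [degN_add, degN_add, degN_single, hd] at this
      omega
    have hcg : c j ≤ v j - w j :=
      hmin j (v j - w j) (w - v) (by omega)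
        (by simp only [Finsupp.tsub_apply]; omega) hdegn.symm
    exact ⟨j, v j - w j, w - v, hji, hcg, by simp only [Finsupp.tsub_apply]; omega,
      by simp only [Finsupp.tsub_apply]; omega, hne, heq⟩
  -- nonemptiness of both filters
  have hPne : ∀ v w : Fin 4 →₀ ℕ, degN a v = degN a w → v ≠ w →
      0 < (Finset.univ.filter (fun k => w k < v k)).card := by
    intro v w hd hvw
    rw [Finset.card_pos]
    by_contra hemp
    rw [Finset.not_nonempty_iff_eq_empty, Finset.filter_eq_empty_iff] at hemp
    apply hvw
    apply le_of_degN_eq ha _ hd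
    intro k
    have := hemp (Finset.mem_univ k)
    omega
  have h1 := hPne v w hd hvw
  have h2 := hPne w v hd.symm (Ne.symm hvw)
  have hsub : (Finset.univ.filter (fun k => w k < v k)) ∪
      (Finset.univ.filter (fun k => v k < w k)) ⊆ Finset.univ.erase i := by
    intro k hk
    simp only [Finset.mem_union, Finset.mem_filter] at hk
    refine Finset.mem_erase.mpr ⟨?_, Finset.mem_univ k⟩
    intro h; subst h
    omega
  have hdisj : Disjoint (Finset.univ.filter (fun k => w k < v k))
      (Finset.univ.filter (fun k => v k < w k)) := by
    rw [Finset.disjoint_left]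
    intro k hk1 hk2
    simp only [Finset.mem_filter] at hk1 hk2
    omega
  have hcards : (Finset.univ.filter (fun k => w k < v k)).card +
      (Finset.univ.filter (fun k => v k < w k)).card ≤ 3 := by
    rw [← Finset.card_union_of_disjoint hdisj]
    calc _ ≤ (Finset.univ.erase i).card := Finset.card_le_card hsub
    _ = 3 := by rw [Finset.card_erase_of_mem (Finset.mem_univ i)]; simp
  rcases (by omega : (Finset.univ.filter (fun k => w k < v k)).card = 1 ∨
      (Finset.univ.filter (fun k => v k < w k)).card = 1) with hc1 | hc1
  · obtain ⟨j, g, n, h⟩ := main v w hvi hwi hd hc1 hvw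
    exact ⟨j, g, n, h.1, h.2.1, h.2.2.1, h.2.2.2.1, h.2.2.2.2.1, Or.inl h.2.2.2.2.2⟩
  · obtain ⟨j, g, n, h⟩ := main w v hwi hvi hd.symm hc1 (Ne.symm hvw)
    exact ⟨j, g, n, h.1, h.2.1, h.2.2.1, h.2.2.2.1, h.2.2.2.2.1, Or.inr h.2.2.2.2.2⟩

/-- Piece X: if a set `S` of at least 3 indices all have the same critical degree `D = c_i a_i`
and their pure powers are all connected to `x_i^{c_i}`, then every vector of degree `D` is
connected to `x_i^{c_i}`. -/
lemma PX (ha : ∀ i, 0 < a i) (hc0 : ∀ l, 0 < c l) (hmin : Hmin a c)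
    (hu0 : ∀ l, u l l = 0) (hud : ∀ l, degN a (u l) = c l * a l)
    {i : Fin 4} {S : Finset (Fin 4)} (hiS : i ∈ S) (hcard : 3 ≤ S.card)
    (hS : ∀ x ∈ S, c x * a x = c i * a i ∧
      Relation.EqvGen (Mv c u) (Finsupp.single x (c x)) (Finsupp.single i (c i))) :
    ∀ y, degN a y = c i * a i →
      Relation.EqvGen (Mv c u) y (Finsupp.single i (c i)) := by
  classical
  intro y hy
  have hDpos : 0 < c i * a i := Nat.mul_pos (hc0 i) (ha i)
  by_cases hsup : ∃ x ∈ S, y x ≠ 0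
  · obtain ⟨x, hxS, hx⟩ := hsup
    have := L1 ha hmin x y (hy.trans (hS x hxS).1.symm) hx
    rw [this]
    exact (hS x hxS).2
  · push_neg at hsup
    have hcard4 : S.card ≤ 4 := by
      calc S.card ≤ Finset.univ.card := Finset.card_le_univ S
      _ = 4 := by simp
    rcases (by omega : S.card = 4 ∨ S.card = 3) with h4 | h3
    · exfalso
      have hSuniv : S = Finset.univ := Finset.eq_univ_of_card S (by simp [h4])
      have : y = 0 := by
        ext k
        exact hsup k (hSuniv ▸ Finset.mem_univ k)
      rw [this, show degN a 0 = 0 from by simp [degN]] at hy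
      omega
    · have hz1 : (Finset.univ \ S).card = 1 := by
        rw [Finset.card_sdiff_of_subset (Finset.subset_univ S)]
        simp [h3]
      obtain ⟨z, hz⟩ := Finset.card_eq_one.mp hz1
      have hzS : z ∉ S := by
        have : z ∈ Finset.univ \ S := by rw [hz]; exact Finset.mem_singleton_self z
        exact (Finset.mem_sdiff.mp this).2
      have hcov : ∀ k, k ∉ S → k = z := by
        intro k hk
        have : k ∈ Finset.univ \ S := Finset.mem_sdiff.mpr ⟨Finset.mem_univ k, hk⟩
        rw [hz] at this
        exact Finset.mem_singleton.mp this
      have hzi : z ≠ i := fun h => hzS (h ▸ hiS)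
      have hyz : y = Finsupp.single z (y z) := by
        ext k
        by_cases hkS : k ∈ S
        · have hkz : k ≠ z := fun h => hzS (h ▸ hkS)
          rw [hsup k hkS, Finsupp.single_apply, if_neg (fun h => hkz h.symm)]
        · rw [hcov k hkS, Finsupp.single_apply, if_pos rfl]
      have hm : y z * a z = c i * a i := by
        rw [hyz, degN_single] at hy
        exact hy
      have hm0 : 0 < y z := by
        rcases Nat.eq_zero_or_pos (y z) with h0 | h0
        · rw [h0] at hm; omega
        · exact h0
      have hczm : c z ≤ y z := by
        apply hmin z (y z) (Finsupp.single i (c i)) hm0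
        · rw [Finsupp.single_apply, if_neg (fun h => hzi h.symm)]
        · rw [degN_single]; exact hm
      have hstep := eqv_move c u (v := y) (j := z) (by rw [hyz, Finsupp.single_apply, if_pos rfl] at hczm ⊢; exact hczm)
      set y₁ := (y - Finsupp.single z (c z)) + u z with hy₁
      have hy₁d : degN a y₁ = c i * a i := by
        have hle : Finsupp.single z (c z) ≤ y := Finsupp.single_le_iff.mpr hczm
        have := degN_tsub (a := a) hle
        rw [degN_single] at this
        rw [hy₁, degN_add, hud z]
        have haz := coord_le_degN a y z
        omega
      obtain ⟨x, hx⟩ : ∃ x, (u z) x ≠ 0 := by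
        by_contra hno
        push_neg at hno
        have h0 : u z = 0 := by ext k; exact hno k
        have h2 := hud z
        rw [h0, show degN a (0 : Fin 4 →₀ ℕ) = 0 from by simp [degN]] at h2
        have := Nat.mul_pos (hc0 z) (ha z)
        omega
      have hxz : x ≠ z := fun h => hx (h ▸ hu0 z)
      have hxS : x ∈ S := by
        by_contra h
        exact hxz (hcov x h)
      have hy₁x : y₁ x ≠ 0 := by
        rw [hy₁]
        simp only [Finsupp.add_apply, Finsupp.tsub_apply, Finsupp.single_apply]
        rw [hsup x hxS, if_neg (fun h => hxz h.symm)]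
        simpa using hx
      have hL1 := L1 ha hmin x y₁ (hy₁d.trans (hS x hxS).1.symm) hy₁x
      rw [hL1] at hstep
      exact eqvt hstep (hS x hxS).2

/-- Edge relation along regress chains: `u x` is the pure power `x_y^{c_y}`. -/
def E (c : Fin 4 → ℕ) (u : Fin 4 → (Fin 4 →₀ ℕ)) (x y : Fin 4) : Prop :=
  u x = Finsupp.single y (c y)

lemma chain_seg (hud : ∀ l, degN a (u l) = c l * a l) :
    ∀ (l : List (Fin 4)) (x j : Fin 4), List.Chain (E c u) x l → (x :: l).Nodup → j ∈ l →
    ∃ S : Finset (Fin 4), x ∈ S ∧ j ∈ S ∧ (∀ y ∈ S, y ∈ x :: l) ∧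
      (∀ y ∈ S, c y * a y = c x * a x ∧
        Relation.EqvGen (Mv c u) (Finsupp.single y (c y)) (Finsupp.single x (c x))) ∧
      (E c u x j ∨ 3 ≤ S.card) := by
  classical
  intro l
  induction l with
  | nil => intro x j _ _ hj; exact absurd hj List.not_mem_nil
  | cons b l' IH =>
    intro x j hch hnd hj
    have hEx : E c u x b := (List.chain_cons.mp hch).1
    have hchb : List.Chain (E c u) b l' := (List.chain_cons.mp hch).2
    have hxb : x ≠ b := by
      have := (List.nodup_cons.mp hnd).1
      intro h; exact this (h ▸ List.mem_cons_self (a := b) (l := l'))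
    have hCb : c b * a b = c x * a x := by
      have h1 := hud x
      rw [hEx, degN_single] at h1
      exact h1
    have hPb : Relation.EqvGen (Mv c u) (Finsupp.single b (c b)) (Finsupp.single x (c x)) := by
      have : Relation.EqvGen (Mv c u) (Finsupp.single x (c x)) (u x) :=
        Relation.EqvGen.rel _ _ ⟨x, 0, (zero_add _).symm, (zero_add _).symm⟩
      rw [hEx] at this
      exact eqvs this
    rcases List.mem_cons.mp hj with rfl | hj'
    · refine ⟨{x, j}, by simp, by simp, ?_, ?_, Or.inl hEx⟩
      · intro y hy
        rcases Finset.mem_insert.mp hy with rfl | hy'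
        · exact List.mem_cons_self
        · rw [Finset.mem_singleton.mp hy']
          exact List.mem_cons_of_mem _ List.mem_cons_self
      · intro y hy
        rcases Finset.mem_insert.mp hy with rfl | hy'
        · exact ⟨rfl, Relation.EqvGen.refl _⟩
        · rw [Finset.mem_singleton.mp hy']
          exact ⟨hCb, hPb⟩
    · obtain ⟨S', hbS', hjS', hsub', hprops', _⟩ :=
        IH b j hchb (List.nodup_cons.mp hnd).2 hj'
      have hxS' : x ∉ S' := by
        intro hxmem
        exact (List.nodup_cons.mp hnd).1 (hsub' x hxmem)
      refine ⟨insert x S', Finset.mem_insert_self _ _, Finset.mem_insert_of_mem hjS', ?_, ?_, Or.inr ?_⟩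
      · intro y hy
        rcases Finset.mem_insert.mp hy with rfl | hy'
        · exact List.mem_cons_self
        · exact List.mem_cons_of_mem _ (hsub' y hy')
      · intro y hy
        rcases Finset.mem_insert.mp hy with rfl | hy'
        · exact ⟨rfl, Relation.EqvGen.refl _⟩
        · obtain ⟨hC, hP⟩ := hprops' y hy'
          exact ⟨hC.trans hCb, eqvt hP hPb⟩
      · have hbj : b ≠ j := by
          have := (List.nodup_cons.mp (List.nodup_cons.mp hnd).2).1
          intro h; exact this (h ▸ hj')
        have h2 : 2 ≤ S'.card := by
          have : ({b, j} : Finset (Fin 4)) ⊆ S' := by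
            intro y hy
            rcases Finset.mem_insert.mp hy with rfl | hy'
            · exact hbS'
            · rw [Finset.mem_singleton.mp hy']; exact hjS'
          calc 2 = ({b, j} : Finset (Fin 4)).card := by rw [Finset.card_insert_of_notMem (by simpa using hbj), Finset.card_singleton]
          _ ≤ S'.card := Finset.card_le_card this
        rw [Finset.card_insert_of_notMem hxS']
        omega

lemma pure_extract (ha : ∀ i, 0 < a i) (hmin : Hmin a c) (hu0 : ∀ l, u l l = 0)
    (hud : ∀ l, degN a (u l) = c l * a l) {i j : Fin 4} {x : Fin 4 →₀ ℕ}
    (hxi : x i = 0) (hxd : degN a x = c i * a i) (hcx : c j ≤ x j) (hji : j ≠ i)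
    (hui : (u j) i ≠ 0) :
    x = Finsupp.single j (c j) ∧ u j = Finsupp.single i (c i) := by
  have hsl : Finsupp.single j (c j) ≤ x := Finsupp.single_le_iff.mpr hcx
  set x' := (x - Finsupp.single j (c j)) + u j with hx'
  have hx'd : degN a x' = c i * a i := by
    have h1 := degN_tsub (a := a) hsl
    rw [degN_single] at h1
    have h2 : c j * a j ≤ x j * a j := Nat.mul_le_mul_right _ hcx
    have h3 := coord_le_degN a x j
    rw [hx', degN_add, hud j]
    omega
  have hx'i : x' i ≠ 0 := by
    rw [hx']
    simp only [Finsupp.add_apply, Finsupp.tsub_apply, Finsupp.single_apply,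
      if_neg (fun h : j = i => hji h), hxi]
    simpa using hui
  have hL1 := L1 ha hmin i x' hx'd hx'i
  have hkey : x + u j = Finsupp.single i (c i) + Finsupp.single j (c j) := by
    calc x + u j = ((x - Finsupp.single j (c j)) + Finsupp.single j (c j)) + u j := by
          rw [tsub_add_cancel_of_le hsl]
    _ = x' + Finsupp.single j (c j) := by rw [hx']; exact add_right_comm _ _ _
    _ = Finsupp.single i (c i) + Finsupp.single j (c j) := by rw [hL1]
  have hxj : x j = c j := by
    have h := DFunLike.congr_fun hkey j
    simp only [Finsupp.add_apply, Finsupp.single_apply, if_pos rfl, if_true,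
      eq_self_iff_true, if_neg (fun h' : i = j => hji h'.symm), hu0 j] at h
    omega
  have huic : (u j) i = c i := by
    have h := DFunLike.congr_fun hkey i
    simp only [Finsupp.add_apply, Finsupp.single_apply, if_pos rfl, if_true,
      eq_self_iff_true, if_neg (fun h' : j = i => hji h'), hxi] at h
    omega
  have hother : ∀ k, k ≠ i → k ≠ j → x k = 0 ∧ (u j) k = 0 := by
    intro k hki hkj
    have h := DFunLike.congr_fun hkey k
    simp only [Finsupp.add_apply, Finsupp.single_apply,
      if_neg (fun h' : i = k => hki h'.symm), if_neg (fun h' : j = k => hkj h'.symm)] at h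
    omega
  constructor
  · ext k
    rw [Finsupp.single_apply]
    by_cases hk : k = j
    · subst hk; rw [if_pos rfl]; exact hxj
    · rw [if_neg (fun h' => hk h'.symm)]
      by_cases hki : k = i
      · subst hki; exact hxi
      · exact (hother k hki hk).1
  · ext k
    rw [Finsupp.single_apply]
    by_cases hki : k = i
    · subst hki; rw [if_pos rfl]; exact huic
    · rw [if_neg (fun h' => hki h'.symm)]
      by_cases hkj : k = j
      · subst hkj; exact hu0 _
      · exact (hother k hki hkj).2

set_option maxHeartbeats 1000000 in
theorem core (ha : ∀ i, 0 < a i) (hc0 : ∀ l, 0 < c l) (hu0 : ∀ l, u l l = 0)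
    (hud : ∀ l, degN a (u l) = c l * a l) (hmin : Hmin a c)
    (hne' : ∀ p q : Fin 4, p ≠ q →
      ¬(u p = Finsupp.single q (c q) ∧ u q = Finsupp.single p (c p))) :
    ∀ d : ℕ, ∀ (i : Fin 4) (rest : List (Fin 4)),
      4 ≤ (i :: rest).length + d → (i :: rest).Nodup → List.Chain (E c u) i rest →
      ∀ (N : ℕ) (v w : Fin 4 →₀ ℕ), v i = 0 → w i = 0 →
        degN a v = c i * a i → degN a w = c i * a i → degN a (v - w) ≤ N →
        Relation.EqvGen (Mv c u) v w := by
  intro d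
  induction d using Nat.strong_induction_on with
  | _ d IHd =>
  intro i rest hlen hnd hch N
  induction N with
  | zero =>
    intro v w hvi hwi hdv hdw hb
    have h0 : v - w = 0 := by
      by_contra h
      obtain ⟨k, hk⟩ := Finsupp.ne_iff.mp h
      have h1 : 0 < (v - w) k * a k := by
        have := ha k
        simp only [Finsupp.coe_zero, Pi.zero_apply] at hk
        positivity
      have h2 := coord_le_degN a (v - w) k
      omega
    have hvle : v ≤ w := by
      refine Finsupp.le_def.mpr fun k => ?_
      have := DFunLike.congr_fun h0 k
      simp only [Finsupp.tsub_apply, Finsupp.coe_zero, Pi.zero_apply] at this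
      omega
    rw [le_of_degN_eq ha hvle (hdv.trans hdw.symm)]
    exact Relation.EqvGen.refl _
  | succ N IHN =>
    intro v w hvi hwi hdv hdw hb
    by_cases hvw : v = w
    · rw [hvw]; exact Relation.EqvGen.refl _
    obtain ⟨j, g, n, hji, hcg, hnj, hni, hn0, hor⟩ :=
      shape ha hmin hvi hwi (hdv.trans hdw.symm) hvw
    have hsy : ∀ v w : Fin 4 →₀ ℕ, degN a v = c i * a i → degN a w = c i * a i →
        degN a (w - v) = degN a (v - w) :=
      fun v w h1 h2 => degN_sub_comm (h2.trans h1.symm)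
    have key : ∀ v w : Fin 4 →₀ ℕ, v i = 0 → w i = 0 →
        degN a v = c i * a i → degN a w = c i * a i →
        degN a (v - w) ≤ N + 1 → v + n = w + Finsupp.single j g →
        Relation.EqvGen (Mv c u) v w := by
      clear hb hvw hor hvi hwi hdv hdw v w
      intro v w hvi hwi hdv hdw hb heq
      -- basic coordinate facts
      have hvj : v j = w j + g := by
        have h := DFunLike.congr_fun heq j
        simp only [Finsupp.add_apply, Finsupp.single_apply, if_pos rfl, if_true,
          eq_self_iff_true, hnj] at h
        omega
      have hoff : ∀ k, k ≠ j → v k + n k = w k := by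
        intro k hk
        have h := DFunLike.congr_fun heq k
        simp only [Finsupp.add_apply, Finsupp.single_apply,
          if_neg (fun h' : j = k => hk h'.symm)] at h
        omega
      have hdegn : degN a n = g * a j := by
        have h := congrArg (degN a) heq
        rw [degN_add, degN_add, degN_single, hdv, hdw] at h
        omega
      have hgj0 : 0 < g := lt_of_lt_of_le (hc0 j) hcg
      have hvw_sub : v - w = Finsupp.single j g := by
        ext k
        rw [Finsupp.tsub_apply, Finsupp.single_apply]
        by_cases hk : k = j
        · subst hk; rw [if_pos rfl]; omega
        · rw [if_neg (fun h' => hk h'.symm)]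
          have := hoff k hk
          omega
      have hΩ : degN a (v - w) = g * a j := by rw [hvw_sub, degN_single]
      have hAj : (u j) j = 0 := hu0 j
      have hAd : degN a (u j) = c j * a j := hud j
      have hcvj : c j ≤ v j := by omega
      have hsl : Finsupp.single j (c j) ≤ v := Finsupp.single_le_iff.mpr hcvj
      have hmv := eqv_move c u (v := v) (j := j) hcvj
      set v' := (v - Finsupp.single j (c j)) + u j with hv'def
      have hv'd : degN a v' = c i * a i := by
        have h1 := degN_tsub (a := a) hsl
        rw [degN_single] at h1
        have h2 : c j * a j ≤ v j * a j := Nat.mul_le_mul_right _ hcvj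
        have h3 := coord_le_degN a v j
        rw [hv'def, degN_add, hud j]
        omega
      have hv'k : ∀ k, k ≠ j → v' k = v k + (u j) k := by
        intro k hk
        rw [hv'def]
        simp only [Finsupp.add_apply, Finsupp.tsub_apply, Finsupp.single_apply,
          if_neg (fun h' : j = k => hk h'.symm)]
        omega
      have hv'j : v' j = v j - c j := by
        rw [hv'def]
        simp only [Finsupp.add_apply, Finsupp.tsub_apply, Finsupp.single_apply, if_pos rfl,
          if_true, eq_self_iff_true, hAj, add_zero]
      by_cases hAi : (u j) i ≠ 0
      · -- CASE 1 : reduction at j jumps to the pure power of x_i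
        obtain ⟨hve, huje⟩ := pure_extract ha hmin hu0 hud hvi hdv hcvj hji hAi
        have hwj : w j = 0 := by
          have : v j = c j := by rw [hve]; simp
          omega
        have hDji : c j * a j = c i * a i := by
          have h1 := hud j
          rw [huje, degN_single] at h1
          omega
        have hvp : Relation.EqvGen (Mv c u) v (u j) := by
          rw [hve]
          exact Relation.EqvGen.rel _ _ ⟨j, 0, (zero_add _).symm, (zero_add _).symm⟩
        by_cases hjL : j ∈ i :: rest
        · -- cycle found
          have hjrest : j ∈ rest := by
            rcases List.mem_cons.mp hjL with h' | h'
            · exact absurd h' hji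
            · exact h'
          obtain ⟨S, hiS, hjS, _, hprops, hdisj⟩ := chain_seg hud rest i j hch hnd hjrest
          rcases hdisj with hEij | h3
          · exact absurd ⟨hEij, huje⟩ (hne' i j (Ne.symm hji))
          · have hPXw := PX ha hc0 hmin hu0 hud hiS h3 hprops w hdw
            have hvp2 : Relation.EqvGen (Mv c u) v (Finsupp.single i (c i)) := by
              rw [← huje]; exact hvp
            exact eqvt hvp2 (eqvs hPXw)
        · -- regress to index j
          have hd1 : 1 ≤ d := by
            have hnd2 : (j :: i :: rest).Nodup := List.nodup_cons.mpr ⟨hjL, hnd⟩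
            have hlen4 : (j :: i :: rest).length ≤ 4 := by
              have := List.Nodup.length_le_card hnd2
              simpa using this
            simp only [List.length_cons] at hlen hlen4 ⊢
            omega
          have hrec := IHd (d - 1) (by omega) j (i :: rest)
            (by simp only [List.length_cons] at hlen ⊢; omega)
            (List.nodup_cons.mpr ⟨hjL, hnd⟩)
            (List.Chain.cons huje hch)
            (degN a (w - u j)) w (u j) hwj hAj
            (by rw [hdw, hDji]) (by rw [hud j, hDji]) (le_refl _)
          exact eqvt hvp (eqvs hrec)
      · push_neg at hAi
        have hv'i : v' i = 0 := by rw [hv'k i (Ne.symm hji), hvi, hAi]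
        by_cases hmix : ∃ k, (u j) k ≠ 0 ∧ n k ≠ 0
        · -- CASE 2 : strict decrease by overlap
          obtain ⟨k₀, hAk, hnk⟩ := hmix
          have hk₀j : k₀ ≠ j := fun h => hAk (h ▸ hAj)
          have hsub2 : v' - w = Finsupp.single j (g - c j) + (u j - n) := by
            ext k
            simp only [Finsupp.tsub_apply, Finsupp.add_apply, Finsupp.single_apply]
            by_cases hk : k = j
            · subst hk
              rw [if_pos rfl, hv'j, hAj, hnj]
              omega
            · rw [if_neg (fun h' => hk h'.symm), hv'k k hk]
              have := hoff k hk
              omega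
          have hlt : degN a (v' - w) < degN a (v - w) := by
            rw [hsub2, hΩ, degN_add, degN_single]
            have h1 : degN a (u j - n) < degN a (u j) := by
              refine degN_lt ha (fun k => ?_) (k := k₀) ?_
              · rw [Finsupp.tsub_apply]; omega
              · rw [Finsupp.tsub_apply]
                omega
            rw [hAd] at h1
            have h2 : c j * a j ≤ g * a j := Nat.mul_le_mul_right _ hcg
            rw [Nat.sub_mul]
            omega
          have hrec := IHN v' w hv'i hwi hv'd hdw (by omega)
          exact eqvt hmv hrec
        · -- CASE 3 : u j disjoint from n
          push_neg at hmix
          obtain ⟨k₀, hk₀⟩ : ∃ k, n k ≠ 0 := Finsupp.ne_iff.mp hn0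
          have hk₀' : ∀ k, n k ≠ 0 → (u j) k = 0 := by
            intro k hk
            by_contra h'
            exact hk (hmix k h')
          have hk₀j : k₀ ≠ j := fun h => hk₀ (h ▸ hnj)
          have hk₀i : k₀ ≠ i := fun h => hk₀ (h ▸ hni)
          by_cases h2c : ∃ k₁, n k₁ ≠ 0 ∧ k₁ ≠ k₀
          · -- 3a : impossible, u j would be zero
            exfalso
            obtain ⟨k₁, hk₁, hk₁₀⟩ := h2c
            have hk₁j : k₁ ≠ j := fun h => hk₁ (h ▸ hnj)
            have hk₁i : k₁ ≠ i := fun h => hk₁ (h ▸ hni)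
            have hAzero : u j = 0 := by
              ext k
              rcases fin4_cases i j k₀ k₁ k (Ne.symm hji) (Ne.symm hk₀i) (Ne.symm hk₁i)
                (Ne.symm hk₀j) (Ne.symm hk₁j) (fun h => hk₁₀ h.symm) with h|h|h|h
              · rw [h]; exact hAi
              · rw [h]; exact hAj
              · rw [h]; exact hk₀' k₀ hk₀
              · rw [h]; exact hk₀' k₁ hk₁
            have h1 := hud j
            rw [hAzero, show degN a (0 : Fin 4 →₀ ℕ) = 0 from by simp [degN]] at h1
            have := Nat.mul_pos (hc0 j) (ha j)
            omega
          · -- 3b : n is a single coordinate k₀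
            push_neg at h2c
            have hnk : ∀ k, k ≠ k₀ → n k = 0 := by
              intro k hk
              by_contra h'
              exact hk (h2c k h')
            have hdegn2 : n k₀ * a k₀ = g * a j := by
              have : n = Finsupp.single k₀ (n k₀) := by
                ext k
                rw [Finsupp.single_apply]
                by_cases hk : k = k₀
                · subst hk; rw [if_pos rfl]
                · rw [if_neg (fun h' => hk h'.symm)]; exact hnk k hk
              rw [this, degN_single] at hdegn
              exact hdegn
            have hcnk : c k₀ ≤ n k₀ := by
              apply hmin k₀ (n k₀) (Finsupp.single j g) (Nat.pos_of_ne_zero hk₀)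
              · rw [Finsupp.single_apply, if_neg (fun h' : j = k₀ => hk₀j h'.symm)]
              · rw [degN_single]; exact hdegn2
            have hwk : w k₀ = v k₀ + n k₀ := (hoff k₀ hk₀j).symm
            have hckw : c k₀ ≤ w k₀ := by omega
            have hBk : (u k₀) k₀ = 0 := hu0 k₀
            have hBd : degN a (u k₀) = c k₀ * a k₀ := hud k₀
            have hmw := eqv_move c u (v := w) (j := k₀) hckw
            set w' := (w - Finsupp.single k₀ (c k₀)) + u k₀ with hw'def
            have hw'd : degN a w' = c i * a i := by
              have h1 := degN_tsub (a := a) (Finsupp.single_le_iff.mpr hckw)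
              rw [degN_single] at h1
              have h2 : c k₀ * a k₀ ≤ w k₀ * a k₀ := Nat.mul_le_mul_right _ hckw
              have h3 := coord_le_degN a w k₀
              rw [hw'def, degN_add, hud k₀]
              omega
            have hw'k : ∀ k, k ≠ k₀ → w' k = w k + (u k₀) k := by
              intro k hk
              rw [hw'def]
              simp only [Finsupp.add_apply, Finsupp.tsub_apply, Finsupp.single_apply,
                if_neg (fun h' : k₀ = k => hk h'.symm)]
              omega
            have hw'k₀ : w' k₀ = w k₀ - c k₀ := by
              rw [hw'def]
              simp only [Finsupp.add_apply, Finsupp.tsub_apply, Finsupp.single_apply,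
                if_pos rfl, if_true, eq_self_iff_true, hBk, add_zero]
            by_cases hBi : (u k₀) i ≠ 0
            · -- 3b-i : reduction at k₀ jumps to the pure power of x_i
              obtain ⟨hwe, huke⟩ := pure_extract ha hmin hu0 hud hwi hdw hckw hk₀i hBi
              have hvk₀ : v k₀ = 0 := by
                have : w k₀ = c k₀ := by rw [hwe]; simp
                omega
              have hDki : c k₀ * a k₀ = c i * a i := by
                have h1 := hud k₀
                rw [huke, degN_single] at h1
                omega
              have hwp : Relation.EqvGen (Mv c u) w (u k₀) := by
                rw [hwe]
                exact Relation.EqvGen.rel _ _ ⟨k₀, 0, (zero_add _).symm, (zero_add _).symm⟩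
              by_cases hkL : k₀ ∈ i :: rest
              · have hkrest : k₀ ∈ rest := by
                  rcases List.mem_cons.mp hkL with h' | h'
                  · exact absurd h' hk₀i
                  · exact h'
                obtain ⟨S, hiS, hkS, _, hprops, hdisj⟩ :=
                  chain_seg hud rest i k₀ hch hnd hkrest
                rcases hdisj with hEik | h3
                · exact absurd ⟨hEik, huke⟩ (hne' i k₀ (Ne.symm hk₀i))
                · have hPXv := PX ha hc0 hmin hu0 hud hiS h3 hprops v hdv
                  have hwp2 : Relation.EqvGen (Mv c u) w (Finsupp.single i (c i)) := by
                    rw [← huke]; exact hwp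
                  exact eqvt hPXv (eqvs hwp2)
              · have hd1 : 1 ≤ d := by
                  have hnd2 : (k₀ :: i :: rest).Nodup := List.nodup_cons.mpr ⟨hkL, hnd⟩
                  have hlen4 : (k₀ :: i :: rest).length ≤ 4 := by
                    have := List.Nodup.length_le_card hnd2
                    simpa using this
                  simp only [List.length_cons] at hlen hlen4 ⊢
                  omega
                have hrec := IHd (d - 1) (by omega) k₀ (i :: rest)
                  (by simp only [List.length_cons] at hlen ⊢; omega)
                  (List.nodup_cons.mpr ⟨hkL, hnd⟩)
                  (List.Chain.cons huke hch)
                  (degN a (v - u k₀)) v (u k₀) hvk₀ hBk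
                  (by rw [hdv, hDki]) (by rw [hud k₀, hDki]) (le_refl _)
                exact eqvt hrec (eqvs hwp)
            · push_neg at hBi
              have hw'i : w' i = 0 := by rw [hw'k i (Ne.symm hk₀i), hwi, hBi]
              by_cases hBj : (u k₀) j ≠ 0
              · -- 3b-ii : reduce w at k₀, strict decrease
                have hsub2 : v - w' = Finsupp.single j (g - (u k₀) j) := by
                  ext k
                  simp only [Finsupp.tsub_apply, Finsupp.single_apply]
                  by_cases hk : k = j
                  · rw [hk, if_pos rfl, hw'k j (Ne.symm hk₀j)]
                    omega
                  · rw [if_neg (fun h' => hk h'.symm)]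
                    by_cases hkk : k = k₀
                    · rw [hkk, hw'k₀]
                      omega
                    · rw [hw'k k hkk]
                      have h1 := hoff k hk
                      have h2 := hnk k hkk
                      omega
                have hlt : degN a (v - w') < degN a (v - w) := by
                  rw [hsub2, hΩ, degN_single]
                  have : g - (u k₀) j < g := by omega
                  exact (Nat.mul_lt_mul_right (ha j)).mpr this
                have hrec := IHN v w' hvi hw'i hdv hw'd (by omega)
                exact eqvt hrec (eqvs hmw)
              · -- 3b-iii : both u j and u k₀ live on the fourth coordinate z
                push_neg at hBj
                obtain ⟨z, hzi, hzj, hzk, hcov⟩ :=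
                  fin4_fourth i j k₀ (Ne.symm hji) (Ne.symm hk₀i) (Ne.symm hk₀j)
                have hAz : ∀ k, k ≠ z → (u j) k = 0 := by
                  intro k hk
                  rcases hcov k with h|h|h|h
                  · rw [h]; exact hAi
                  · rw [h]; exact hAj
                  · rw [h]; exact hk₀' k₀ hk₀
                  · exact absurd h hk
                have hBz : ∀ k, k ≠ z → (u k₀) k = 0 := by
                  intro k hk
                  rcases hcov k with h|h|h|h
                  · rw [h]; exact hBi
                  · rw [h]; exact hBj
                  · rw [h]; exact hBk
                  · exact absurd h hk
                have hαd : (u j) z * a z = c j * a j := by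
                  have : u j = Finsupp.single z ((u j) z) := by
                    ext k
                    rw [Finsupp.single_apply]
                    by_cases hk : k = z
                    · subst hk; rw [if_pos rfl]
                    · rw [if_neg (fun h' => hk h'.symm)]; exact hAz k hk
                  have h1 := hud j
                  rw [this, degN_single] at h1
                  exact h1
                have hβ0 : 0 < (u k₀) z := by
                  rcases Nat.eq_zero_or_pos ((u k₀) z) with h0 | h0
                  · exfalso
                    have hB0 : u k₀ = 0 := by
                      ext k
                      by_cases hk : k = z
                      · rw [hk]; exact h0
                      · exact hBz k hk
                    have h1 := hud k₀
                    rw [hB0, show degN a (0 : Fin 4 →₀ ℕ) = 0 from by simp [degN]] at h1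
                    have := Nat.mul_pos (hc0 k₀) (ha k₀)
                    omega
                  · exact h0
                have hα0 : 0 < (u j) z := by
                  rcases Nat.eq_zero_or_pos ((u j) z) with h0 | h0
                  · exfalso
                    rw [h0, Nat.zero_mul] at hαd
                    have := Nat.mul_pos (hc0 j) (ha j)
                    omega
                  · exact h0
                have hnz : n z = 0 := hnk z hzk
                have hsub3 : v' - w' = Finsupp.single j (g - c j) +
                    Finsupp.single z ((u j) z - (u k₀) z) := by
                  ext k
                  simp only [Finsupp.tsub_apply, Finsupp.add_apply, Finsupp.single_apply]
                  rcases hcov k with h|h|h|h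
                  · rw [h, if_neg (fun h' : j = i => hji h'), if_neg (fun h' : z = i => hzi h'),
                      hv'k i (Ne.symm hji), hw'k i (Ne.symm hk₀i), hvi, hwi, hAi, hBi]
                    omega
                  · rw [h, if_pos rfl, if_neg (fun h' : z = j => hzj h'), hv'j,
                      hw'k j (Ne.symm hk₀j), hBj]
                    omega
                  · rw [h, if_neg (fun h' : j = k₀ => hk₀j h'.symm),
                      if_neg (fun h' : z = k₀ => hzk h'),
                      hv'k k₀ hk₀j, hw'k₀, hk₀' k₀ hk₀]
                    omega
                  · rw [h, if_neg (fun h' : j = z => hzj h'.symm), if_pos rfl,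
                      hv'k z hzj, hw'k z hzk]
                    have h1 := hoff z hzj
                    omega
                have hlt : degN a (v' - w') < degN a (v - w) := by
                  rw [hsub3, hΩ, degN_add, degN_single, degN_single]
                  have h1 : ((u j) z - (u k₀) z) * a z < (u j) z * a z :=
                    (Nat.mul_lt_mul_right (ha z)).mpr (by omega)
                  have h2 : c j * a j ≤ g * a j := Nat.mul_le_mul_right _ hcg
                  rw [Nat.sub_mul]
                  omega
                have hrec := IHN v' w' hv'i hw'i hv'd hw'd (by omega)
                exact eqvt hmv (eqvt hrec (eqvs hmw))
    rcases hor with h | h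
    · exact key v w hvi hwi hdv hdw hb h
    · exact eqvs (key w v hwi hvi hdw hdv (by rw [hsy v w hdv hdw]; exact hb) h)

end S17

open S17

section Bridge

/-- Evaluation `x_l ↦ T^(a l)`. -/
noncomputable def phiA (a : Fin 4 → ℕ) :
    MvPolynomial (Fin 4) K →ₐ[K] Polynomial K :=
  MvPolynomial.aeval fun l => (Polynomial.X : Polynomial K) ^ a l

lemma phiA_monomial (a : Fin 4 → ℕ) (x : Fin 4 →₀ ℕ) :
    phiA K a (MvPolynomial.monomial x (1 : K)) = Polynomial.X ^ degN a x := by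
  rw [phiA, MvPolynomial.aeval_monomial, map_one, one_mul, Finsupp.prod]
  calc ∏ l ∈ x.support, ((Polynomial.X : Polynomial K) ^ a l) ^ x l
      = ∏ l ∈ x.support, (Polynomial.X : Polynomial K) ^ (x l * a l) := by
        refine Finset.prod_congr rfl fun l _ => ?_
        rw [← pow_mul, Nat.mul_comm]
  _ = (Polynomial.X : Polynomial K) ^ (∑ l ∈ x.support, x l * a l) :=
        Finset.prod_pow_eq_pow_sum _ _ _
  _ = _ := by
        congr 1
        unfold degN
        refine Finset.sum_subset (Finset.subset_univ _) fun l _ hl => ?_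
        rw [Finsupp.notMem_support_iff.mp hl, Nat.zero_mul]

lemma deg_eq_of_mem_curve (a : Fin 4 → ℕ) {x y : Fin 4 →₀ ℕ}
    (h : (MvPolynomial.monomial x (1 : K) - MvPolynomial.monomial y (1 : K)) ∈ curveIdeal K a) :
    degN a x = degN a y := by
  have hker : curveIdeal K a ≤ RingHom.ker (phiA K a).toRingHom := by
    rw [curveIdeal, Ideal.span_le]
    rintro g ⟨p, q, hpq, rfl⟩
    rw [SetLike.mem_coe, RingHom.mem_ker]
    simp only [AlgHom.toRingHom_eq_coe, RingHom.coe_coe, map_sub]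
    rw [phiA_monomial, phiA_monomial, hpq, sub_self]
  have h2 := hker h
  rw [RingHom.mem_ker] at h2
  simp only [AlgHom.toRingHom_eq_coe, RingHom.coe_coe, map_sub] at h2
  rw [phiA_monomial, phiA_monomial, sub_eq_zero] at h2
  have h3 := congrArg Polynomial.natDegree h2
  rwa [Polynomial.natDegree_X_pow, Polynomial.natDegree_X_pow] at h3

lemma eqv_mem (c : Fin 4 → ℕ) (u : Fin 4 → (Fin 4 →₀ ℕ))
    (f : Fin 4 → MvPolynomial (Fin 4) K)
    (hf : ∀ i, f i = MvPolynomial.monomial (Finsupp.single i (c i)) (1 : K) -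
      MvPolynomial.monomial (u i) (1 : K))
    {x y : Fin 4 →₀ ℕ} (h : Relation.EqvGen (S17.Mv c u) x y) :
    (MvPolynomial.monomial x (1 : K) - MvPolynomial.monomial y (1 : K)) ∈
      Ideal.span (Set.range f) := by
  induction h with
  | rel x y hxy =>
    obtain ⟨j, t, rfl, rfl⟩ := hxy
    have hkey : MvPolynomial.monomial (t + Finsupp.single j (c j)) (1 : K) -
        MvPolynomial.monomial (t + u j) (1 : K) = MvPolynomial.monomial t (1 : K) * f j := by
      rw [hf j, mul_sub, MvPolynomial.monomial_mul, MvPolynomial.monomial_mul, one_mul]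
    rw [hkey]
    exact Ideal.mul_mem_left _ _ (Ideal.subset_span ⟨j, rfl⟩)
  | refl x => simp
  | symm x y _ ih =>
    have h1 : MvPolynomial.monomial y (1 : K) - MvPolynomial.monomial x (1 : K) =
        -(MvPolynomial.monomial x (1 : K) - MvPolynomial.monomial y (1 : K)) := by ring
    rw [h1]
    exact neg_mem ih
  | trans x y z _ _ ih1 ih2 =>
    have h1 : MvPolynomial.monomial x (1 : K) - MvPolynomial.monomial z (1 : K) =
        (MvPolynomial.monomial x (1 : K) - MvPolynomial.monomial y (1 : K)) +
        (MvPolynomial.monomial y (1 : K) - MvPolynomial.monomial z (1 : K)) := by ring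
    rw [h1]
    exact add_mem ih1 ih2

end Bridge

/-- Let `n = 4` and let `f_i = x_i^{c_i} - ∏_{j ≠ i} x_j^{u_{ij}}`,
`i = 1, …, 4`, be critical binomials of `I_A`. If `f_i ≠ -f_j` for every `i ≠ j`, then
`C_A = ⟨f_1, f_2, f_3, f_4⟩`. -/
theorem statement17 (a c : Fin 4 → ℕ) (ha : ∀ i, 0 < a i)
    (hgcd : Finset.univ.gcd a = 1) (hc : ∀ i, IsCritExp a i (c i))
    (u : Fin 4 → (Fin 4 →₀ ℕ)) (hu : ∀ i, u i i = 0)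
    (f : Fin 4 → MvPolynomial (Fin 4) K)
    (hf : ∀ i, f i = monomial (Finsupp.single i (c i)) (1 : K) - monomial (u i) (1 : K))
    (hmem : ∀ i, f i ∈ curveIdeal K a)
    (hne : ∀ i j, i ≠ j → f i ≠ -f j) :
    criticalIdeal K a c = Ideal.span (Set.range f) := by
  classical
  have hc0 : ∀ l, 0 < c l := fun l => (hc l).1.1
  have hmin : S17.Hmin a c := fun l m x h1 h2 h3 => (hc l).2 ⟨h1, x, h2, h3⟩
  have hud : ∀ l, degN a (u l) = c l * a l := by
    intro l
    have hm := hmem l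
    rw [hf l] at hm
    have h1 := deg_eq_of_mem_curve K a hm
    rw [S17.degN_single] at h1
    exact h1.symm
  have hne' : ∀ p q : Fin 4, p ≠ q →
      ¬(u p = Finsupp.single q (c q) ∧ u q = Finsupp.single p (c p)) := by
    rintro p q hpq ⟨h1, h2⟩
    exact hne p q hpq (by rw [hf p, hf q, h1, h2, neg_sub])
  apply le_antisymm
  · rw [criticalIdeal, Ideal.span_le]
    rintro g ⟨i, x, hxi, hgeq, hgmem⟩
    rw [hgeq] at hgmem ⊢
    have hdx : degN a x = c i * a i := by
      have h1 := deg_eq_of_mem_curve K a hgmem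
      rw [S17.degN_single] at h1
      exact h1.symm
    have hconn : Relation.EqvGen (S17.Mv c u) x (u i) :=
      S17.core ha hc0 hu hud hmin hne' 3 i []
        (by simp) (by simp) List.Chain.nil
        (degN a (x - u i)) x (u i) hxi (hu i) hdx (hud i) (le_refl _)
    have hstep : Relation.EqvGen (S17.Mv c u) (Finsupp.single i (c i)) (u i) :=
      Relation.EqvGen.rel _ _ ⟨i, 0, (zero_add _).symm, (zero_add _).symm⟩
    have hfin : Relation.EqvGen (S17.Mv c u) (Finsupp.single i (c i)) x :=
      S17.eqvt hstep (S17.eqvs hconn)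
    exact eqv_mem (K := K) c u f hf hfin
  · rw [Ideal.span_le]
    rintro g ⟨i, rfl⟩
    exact Ideal.subset_span ⟨i, u i, hu i, hf i, hmem i⟩
end
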